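/- Let F be an algebraically closed field, n ≥ 1, and e, f ∈ M_n(F). If the linear map h : M_n(F) → M_n(F) defined by h(x) = ex + xf is nonzero, then its rank (dimension of its image) is at least n. -/

import Mathlib

open Matrix Module

private lemma aux_scalar {F : Type*} [Field F] {n : ℕ} (hn : 1 ≤ n)
    (M : Matrix (Fin n) (Fin n) F) (h : ∀ v : Fin n → F, ∃ c : F, M *ᵥ v = c • v) :
    ∃ a : F, M = a • 1 := by
  choose c hc using fun j => h (Pi.single j 1)
  have hM : ∀ i j : Fin n, M i j = c j * (Pi.single j 1 : Fin n → F) i := by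
    intro i j
    have := congrFun (hc j) i
    simpa [mulVec_single] using this
  have hcc : ∀ i j : Fin n, c i = c j := by
    intro i j
    rcases eq_or_ne i j with rfl | hij
    · rfl
    obtain ⟨d, hd⟩ := h (Pi.single i 1 + Pi.single j 1)
    have hi := congrFun hd i
    have hj := congrFun hd j
    simp [mulVec_add, hc i, hc j, Pi.single_apply, hij, hij.symm] at hi hj
    rw [hi, hj]
  refine ⟨c ⟨0, hn⟩, ?_⟩
  ext i j
  rcases eq_or_ne i j with rfl | hij
  · simp [hM, hcc i ⟨0, hn⟩, Pi.single_apply]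
  · simp [hM, Pi.single_apply, hij, Ne.symm hij, Matrix.one_apply]

/-- Over an algebraically closed field, if h(x) = ex + xf is a nonzero operator on
M_n(F), then its rank is at least n. -/
theorem stmt_8 (F : Type*) [Field F] [IsAlgClosed F] (n : ℕ) (hn : 1 ≤ n)
    (e f : Matrix (Fin n) (Fin n) F)
    (h : Matrix (Fin n) (Fin n) F →ₗ[F] Matrix (Fin n) (Fin n) F)
    (hh : h = LinearMap.mulLeft F e + LinearMap.mulRight F f)
    (hne : h ≠ 0) :
    n ≤ Module.finrank F (LinearMap.range h) := by
  -- the key entrywise formula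
  have key : ∀ (v w : Fin n → F) (i j : Fin n),
      h (vecMulVec v w) i j = (e *ᵥ v) i * w j + v i * (w ᵥ* f) j := by
    intro v w i j
    rw [hh]
    simp only [LinearMap.add_apply, LinearMap.mulLeft_apply, LinearMap.mulRight_apply,
      Matrix.add_apply, Matrix.mul_apply, vecMulVec_apply, mulVec, vecMul, dotProduct]
    rw [Finset.sum_mul, Finset.mul_sum]
    congr 1
    · exact Finset.sum_congr rfl fun k _ => by ring
    · exact Finset.sum_congr rfl fun k _ => by ring
  -- generic injectivity bound
  have main : ∀ (θ : (Fin n → F) →ₗ[F] Matrix (Fin n) (Fin n) F),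
      Function.Injective (h ∘ₗ θ) → n ≤ Module.finrank F (LinearMap.range h) := by
    intro θ hinj
    have h1 : Module.finrank F (LinearMap.range (h ∘ₗ θ)) = n := by
      rw [LinearMap.finrank_range_of_inj hinj, Module.finrank_fin_fun]
    have h2 : LinearMap.range (h ∘ₗ θ) ≤ LinearMap.range h := LinearMap.range_comp_le_range θ h
    calc n = Module.finrank F (LinearMap.range (h ∘ₗ θ)) := h1.symm
      _ ≤ Module.finrank F (LinearMap.range h) := Submodule.finrank_mono h2
  by_cases he : ∀ v : Fin n → F, ∃ c : F, e *ᵥ v = c • v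
  · by_cases hf : ∀ w : Fin n → F, ∃ c : F, w ᵥ* f = c • w
    · -- both scalar
      obtain ⟨a, ha⟩ := aux_scalar hn e he
      obtain ⟨b, hb⟩ := aux_scalar hn fᵀ (by
        intro v
        obtain ⟨c, hc⟩ := hf v
        exact ⟨c, by rw [← hc, ← vecMul_transpose, transpose_transpose]⟩)
      have hfb : f = b • 1 := by
        have := congrArg Matrix.transpose hb
        simpa [transpose_smul] using this
      have hab : a + b ≠ 0 := by
        intro h0
        apply hne
        ext x i j
        rw [hh]
        simp only [ha, hfb, LinearMap.add_apply, LinearMap.mulLeft_apply,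
          LinearMap.mulRight_apply, Matrix.smul_mul, Matrix.mul_smul, one_mul, mul_one,
          ← add_smul, h0, zero_smul, LinearMap.zero_apply]
      -- h is injective
      have hinj : Function.Injective h := by
        rw [← LinearMap.ker_eq_bot, LinearMap.ker_eq_bot']
        intro x hx
        rw [hh] at hx
        simp only [LinearMap.add_apply, LinearMap.mulLeft_apply, LinearMap.mulRight_apply,
          ha, hfb, Matrix.smul_mul, Matrix.mul_smul, one_mul, mul_one, ← add_smul] at hx
        exact (smul_eq_zero.mp hx).resolve_left hab
      rw [LinearMap.finrank_range_of_inj hinj, Module.finrank_matrix]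
      simpa using Nat.le_mul_of_pos_left n (show 0 < n by omega)
    · -- f not scalar: fix w with w ᵥ* f not a multiple of w
      push_neg at hf
      obtain ⟨w, hw⟩ := hf
      set θ : (Fin n → F) →ₗ[F] Matrix (Fin n) (Fin n) F :=
        { toFun := fun v => vecMulVec v w
          map_add' := by intro x y; ext i j; simp [vecMulVec_apply]; ring
          map_smul' := by intro c x; ext i j; simp [vecMulVec_apply]; ring }
      apply main θ
      rw [← LinearMap.ker_eq_bot, LinearMap.ker_eq_bot']
      intro v hv
      simp only [LinearMap.comp_apply] at hv
      have hent : ∀ i j, (e *ᵥ v) i * w j + v i * (w ᵥ* f) j = 0 := by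
        intro i j
        rw [← key]
        show (h (vecMulVec v w)) i j = 0
        rw [show h (vecMulVec v w) = 0 from hv]
        rfl
      funext i
      show v i = (0 : F)
      by_contra hvi
      have hvi' : v i ≠ 0 := hvi
      refine (hw (-((e *ᵥ v) i) / v i) ?_).elim
      funext j
      show (w ᵥ* f) j = (-((e *ᵥ v) i) / v i) * w j
      have hq := hent i j
      field_simp
      linear_combination hq
  · -- e not scalar: fix v with e *ᵥ v not a multiple of v
    push_neg at he
    obtain ⟨v, hv⟩ := he
    set θ : (Fin n → F) →ₗ[F] Matrix (Fin n) (Fin n) F :=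
      { toFun := fun w => vecMulVec v w
        map_add' := by intro x y; ext i j; simp [vecMulVec_apply]; ring
        map_smul' := by intro c x; ext i j; simp [vecMulVec_apply]; ring }
    apply main θ
    rw [← LinearMap.ker_eq_bot, LinearMap.ker_eq_bot']
    intro w hwz
    simp only [LinearMap.comp_apply] at hwz
    have hent : ∀ i j, (e *ᵥ v) i * w j + v i * (w ᵥ* f) j = 0 := by
      intro i j
      rw [← key]
      show (h (vecMulVec v w)) i j = 0
      rw [show h (vecMulVec v w) = 0 from hwz]
      rfl
    funext j
    show w j = (0 : F)
    by_contra hwj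
    have hwj' : w j ≠ 0 := hwj
    refine (hv (-((w ᵥ* f) j) / w j) ?_).elim
    funext i
    show (e *ᵥ v) i = (-((w ᵥ* f) j) / w j) * v i
    have hq := hent i j
    field_simp
    linear_combination hq
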